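/- arXiv:2007.13382 — 2 statements merged into one kernel-verified Lean document; each statement's English description precedes it below -/
import Mathlib

section
/- If f is monotone increasing submodular with f(opt) − f(S_{i−1}) > 0 for a finite optimal set opt of size k, then the element j maximizing the marginal gain over opt \ S_{i−1} satisfies f(S_{i−1} ∪ {j}) − f(S_{i−1}) ≥ (1/k) · (f(opt) − f(S_{i−1})). -/
lemma submod_union_bound {α : Type*} [DecidableEq α] (f : Finset α → ℝ)
    (hsub : ∀ (A B : Finset α), A ⊆ B → ∀ j ∉ B,
      f (insert j A) - f A ≥ f (insert j B) - f B)
    (S : Finset α) (T : Finset α) :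
    f (S ∪ T) - f S ≤ ∑ e ∈ T, (f (insert e S) - f S) := by
  induction T using Finset.induction with
  | empty => simp
  | @insert a T ha ih =>
    rw [Finset.sum_insert ha, Finset.union_insert]
    by_cases haS : a ∈ S
    · rw [Finset.insert_eq_self.mpr (Finset.mem_union_left T haS),
        Finset.insert_eq_self.mpr haS]
      linarith
    · have hstep := hsub S (S ∪ T) Finset.subset_union_left a (by
        simp [Finset.mem_union, haS, ha])
      linarith

theorem greedy_best_marginal_gain
    {α : Type*} [DecidableEq α] [Fintype α] (f : Finset α → ℝ)
    (hmono : ∀ A B : Finset α, A ⊆ B → f A ≤ f B)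
    (hsub : ∀ (A B : Finset α), A ⊆ B → ∀ j ∉ B,
      f (insert j A) - f A ≥ f (insert j B) - f B)
    (k : ℕ) (hk : 1 ≤ k) (opt : Finset α) (hopt : opt.card = k)
    (hoptmax : ∀ T : Finset α, T.card = k → f T ≤ f opt)
    (S : Finset α) (hne : (opt \ S).Nonempty)
    (hpos : 0 < f opt - f S)
    (j : α) (hj : j ∈ opt \ S)
    (hjmax : ∀ j' ∈ opt \ S, f (insert j' S) - f S ≤ f (insert j S) - f S) :
    f (insert j S) - f S ≥ (1 / k) * (f opt - f S) := by
  set m := f (insert j S) - f S with hm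
  have hbound := submod_union_bound f hsub S (opt \ S)
  have hunion : S ∪ (opt \ S) = S ∪ opt := by
    ext x; by_cases hx : x ∈ S <;> simp [Finset.mem_union, Finset.mem_sdiff, hx]
  have hmonoS : f opt ≤ f (S ∪ (opt \ S)) := by
    rw [hunion]; exact hmono opt (S ∪ opt) Finset.subset_union_right
  have hsum_le : ∑ e ∈ opt \ S, (f (insert e S) - f S) ≤ (opt \ S).card * m := by
    calc ∑ e ∈ opt \ S, (f (insert e S) - f S)
        ≤ ∑ _e ∈ opt \ S, m := Finset.sum_le_sum (fun e he => hjmax e he)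
      _ = (opt \ S).card * m := by rw [Finset.sum_const, nsmul_eq_mul]
  have hkey : f opt - f S ≤ (opt \ S).card * m := by linarith
  have hmpos : 0 < m := by
    by_contra h
    push_neg at h
    have : ((opt \ S).card : ℝ) * m ≤ 0 :=
      mul_nonpos_of_nonneg_of_nonpos (Nat.cast_nonneg _) h
    linarith
  have hcard : ((opt \ S).card : ℝ) ≤ k := by
    have : (opt \ S).card ≤ opt.card := Finset.card_le_card (Finset.sdiff_subset)
    exact_mod_cast this.trans_eq hopt
  have hkpos : (0 : ℝ) < k := by exact_mod_cast hk
  have : f opt - f S ≤ k * m := by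
    calc f opt - f S ≤ (opt \ S).card * m := hkey
      _ ≤ k * m := mul_le_mul_of_nonneg_right hcard hmpos.le
  rw [ge_iff_le, div_mul_eq_mul_div, one_mul, div_le_iff₀ hkpos]
  linarith [this]
end

section
/- Greedy selection with exact best local improvements at each step on a monotone increasing nonnegative submodular function f with f(∅)=0 produces, after k steps, a set S_k with f(S_k) ≥ (1 − 1/e) · max_{|S| ≤ k} f(S). -/
lemma greedy_sum_marginal {α : Type*} [DecidableEq α] (f : Finset α → ℝ)
    (hsub : ∀ (A B : Finset α), A ⊆ B → ∀ j ∉ B,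
      f (insert j A) - f A ≥ f (insert j B) - f B) :
    ∀ (B A : Finset α), f (A ∪ B) ≤ f A + ∑ j ∈ B \ A, (f (insert j A) - f A) := by
  intro B
  induction B using Finset.induction_on with
  | empty => intro A; simp
  | insert b B hb ih =>
    intro A
    by_cases hba : b ∈ A
    · rw [Finset.union_insert, Finset.insert_eq_self.2 (Finset.mem_union_left _ hba),
        Finset.insert_sdiff_of_mem _ hba]
      exact ih A
    · have hbu : b ∉ A ∪ B := by simp [hba, hb]
      have h1 : f (insert b (A ∪ B)) - f (A ∪ B) ≤ f (insert b A) - f A :=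
        hsub A (A ∪ B) Finset.subset_union_left b hbu
      rw [Finset.union_insert, Finset.insert_sdiff_of_notMem _ hba,
        Finset.sum_insert (by simp [hb])]
      have := ih A
      linarith

theorem exact_greedy_submodular_approx
    {α : Type*} [DecidableEq α] [Fintype α] (f : Finset α → ℝ)
    (hmono : ∀ A B : Finset α, A ⊆ B → f A ≤ f B)
    (hsub : ∀ (A B : Finset α), A ⊆ B → ∀ j ∉ B,
      f (insert j A) - f A ≥ f (insert j B) - f B)
    (hempty : f ∅ = 0) (hnonneg : ∀ A, 0 ≤ f A)
    (k : ℕ) (hk : 1 ≤ k)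
    (S : ℕ → Finset α) (hS0 : S 0 = ∅)
    (hgreedy : ∀ i < k, ∃ j, S (i + 1) = insert j (S i) ∧
      ∀ j' : α, f (insert j' (S i)) - f (S i) ≤ f (S (i + 1)) - f (S i)) :
    ∀ opt : Finset α, opt.card ≤ k →
      f (S k) ≥ (1 - Real.exp (-1)) * f opt := by
  intro opt hopt
  have hOPT0 : 0 ≤ f opt := hnonneg opt
  have hk0 : (0:ℝ) < (k:ℝ) := by exact_mod_cast hk
  have hr : (0:ℝ) ≤ 1 - 1/(k:ℝ) := by
    have : 1/(k:ℝ) ≤ 1 := by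
      rw [div_le_one hk0]; exact_mod_cast hk
    linarith
  have key : ∀ i < k, f opt - f (S (i+1)) ≤ (1 - 1/(k:ℝ)) * (f opt - f (S i)) := by
    intro i hi
    obtain ⟨j, hSj, hbest⟩ := hgreedy i hi
    set δ := f (S (i+1)) - f (S i) with hδ
    have hδ0 : 0 ≤ δ := by
      have := hmono (S i) (S (i+1)) (hSj ▸ Finset.subset_insert _ _)
      simp only [hδ]; linarith
    have hsum := greedy_sum_marginal f hsub opt (S i)
    have hmon : f opt ≤ f (S i ∪ opt) := hmono opt _ Finset.subset_union_right
    have hbound : ∑ j' ∈ opt \ S i, (f (insert j' (S i)) - f (S i))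
        ≤ ((opt \ S i).card : ℝ) * δ := by
      calc ∑ j' ∈ opt \ S i, (f (insert j' (S i)) - f (S i))
          ≤ ∑ _j' ∈ opt \ S i, δ := Finset.sum_le_sum fun j' _ => hbest j'
        _ = ((opt \ S i).card : ℝ) * δ := by rw [Finset.sum_const, nsmul_eq_mul]
    have hcard : ((opt \ S i).card : ℝ) ≤ (k:ℝ) := by
      exact_mod_cast le_trans (Finset.card_le_card Finset.sdiff_subset) hopt
    have hkd : f opt - f (S i) ≤ (k:ℝ) * δ := by
      have h2 : ((opt \ S i).card : ℝ) * δ ≤ (k:ℝ) * δ :=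
        mul_le_mul_of_nonneg_right hcard hδ0
      linarith
    have hdiv : (f opt - f (S i)) / (k:ℝ) ≤ δ := by
      rw [div_le_iff₀ hk0]; linarith [mul_comm (k:ℝ) δ]
    have heq : (1 - 1/(k:ℝ)) * (f opt - f (S i))
        = (f opt - f (S i)) - (f opt - f (S i))/(k:ℝ) := by ring
    have hδe : f (S (i+1)) = f (S i) + δ := by simp [hδ]
    rw [heq, hδe]; linarith
  have main : ∀ i ≤ k, f opt - f (S i) ≤ (1 - 1/(k:ℝ))^i * f opt := by
    intro i
    induction i with
    | zero => intro _; simp [hS0, hempty]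
    | succ n ih =>
      intro hn
      have hnk : n < k := hn
      have h1 := key n hnk
      have h2 := ih (le_of_lt hnk)
      have h3 : (1 - 1/(k:ℝ)) * (f opt - f (S n))
          ≤ (1 - 1/(k:ℝ)) * ((1 - 1/(k:ℝ))^n * f opt) :=
        mul_le_mul_of_nonneg_left h2 hr
      calc f opt - f (S (n+1)) ≤ (1 - 1/(k:ℝ)) * (f opt - f (S n)) := h1
        _ ≤ (1 - 1/(k:ℝ)) * ((1 - 1/(k:ℝ))^n * f opt) := h3
        _ = (1 - 1/(k:ℝ))^(n+1) * f opt := by ring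
  have hfin := main k le_rfl
  have hexp : (1 - 1/(k:ℝ))^k ≤ Real.exp (-1) := by
    have h1 : 1 - 1/(k:ℝ) ≤ Real.exp (-(1/(k:ℝ))) := by
      have := Real.add_one_le_exp (-(1/(k:ℝ)))
      linarith
    calc (1 - 1/(k:ℝ))^k ≤ (Real.exp (-(1/(k:ℝ))))^k := pow_le_pow_left₀ hr h1 k
      _ = Real.exp ((k:ℝ) * (-(1/(k:ℝ)))) := (Real.exp_nat_mul _ k).symm
      _ = Real.exp (-1) := by
          congr 1
          field_simp
  have h4 : (1 - 1/(k:ℝ))^k * f opt ≤ Real.exp (-1) * f opt :=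
    mul_le_mul_of_nonneg_right hexp hOPT0
  linarith
end
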